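/- Let n ≥ 3 be an integer, a > 0 and S > 1. Then lim as v → 0⁺ of v · ∫ from 1 to S of z^{-(n-2)} / (v² + a(1 - z^{-(n-2)}))^{3/2} dz = 2/(a(n-2)). -/

import Mathlib

open Filter Set MeasureTheory intervalIntegral

/-- The zero-initial-velocity limit in dimension `n ≥ 3`:
`v ∫₁^S z^{-(n-2)}/(v² + a(1 - z^{-(n-2)}))^{3/2} dz → 2/(a(n-2))` as `v → 0⁺`. -/
theorem zero_velocity_limit_dim_ge_three (n : ℕ) (hn : 3 ≤ n) (a S : ℝ)
    (ha : 0 < a) (hS : 1 < S) :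
    Filter.Tendsto
      (fun v : ℝ => v * ∫ z in (1 : ℝ)..S,
        (z ^ (n - 2))⁻¹ / (v ^ 2 + a * (1 - (z ^ (n - 2))⁻¹)) ^ ((3 : ℝ) / 2))
      (nhdsWithin 0 (Set.Ioi 0)) (nhds (2 / (a * ((n : ℝ) - 2)))) := by
  set m : ℕ := n - 2 with hmdef
  have hm1 : 1 ≤ m := by omega
  have hmcast : ((m : ℕ) : ℝ) = (n : ℝ) - 2 := by
    have h2n : 2 ≤ n := by omega
    push_cast [hmdef, Nat.cast_sub h2n]
    ring
  have hmpos : (0:ℝ) < (m:ℝ) := by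
    have : (1:ℝ) ≤ (m:ℝ) := by exact_mod_cast hm1
    linarith
  -- P v z > 0 for z ≥ 1, v > 0; also 1 - (z^m)⁻¹ ≥ 0 for z ≥ 1
  have hu_nonneg : ∀ z : ℝ, 1 ≤ z → 0 ≤ 1 - (z ^ m)⁻¹ := by
    intro z hz
    have h1 : (1:ℝ) ≤ z ^ m := one_le_pow₀ hz
    have : (z ^ m)⁻¹ ≤ 1 := by
      rw [inv_le_one_iff₀]; right; exact h1
    linarith
  have hP_pos : ∀ v z : ℝ, 0 < v → 1 ≤ z → 0 < v ^ 2 + a * (1 - (z ^ m)⁻¹) := by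
    intro v z hv hz
    have := hu_nonneg z hz
    nlinarith
  -- the auxiliary function g
  set g : ℝ → ℝ := fun v =>
    (∫ z in (1:ℝ)..S, v * (v ^ 2 + a * (1 - (z ^ m)⁻¹)) ^ (-(1:ℝ)/2))
      - v * S * (v ^ 2 + a * (1 - (S ^ m)⁻¹)) ^ (-(1:ℝ)/2) + 1 with hgdef
  -- Step 1: eventual equality
  have hev : ∀ᶠ v in nhdsWithin (0:ℝ) (Set.Ioi 0),
      (v * ∫ z in (1 : ℝ)..S,
        (z ^ (n - 2))⁻¹ / (v ^ 2 + a * (1 - (z ^ (n - 2))⁻¹)) ^ ((3 : ℝ) / 2))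
      = (2 / (a * (m:ℝ))) * g v := by
    filter_upwards [self_mem_nhdsWithin] with v hv
    have hv : (0:ℝ) < v := hv
    set P : ℝ → ℝ := fun z => v ^ 2 + a * (1 - (z ^ m)⁻¹) with hPdef
    have hPz : ∀ z ∈ Set.uIcc (1:ℝ) S, 0 < P z := by
      intro z hz
      rw [Set.uIcc_of_le hS.le] at hz
      exact hP_pos v z hv hz.1
    -- derivative of F z = z * (P z) ^ (-(1:ℝ)/2)
    have hderiv : ∀ z ∈ Set.uIcc (1:ℝ) S, HasDerivAt (fun z => z * (P z) ^ (-(1:ℝ)/2))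
        ((P z) ^ (-(1:ℝ)/2) + z * ((a * ((m:ℝ) * z ^ (m-1) / (z ^ m) ^ 2)) * (-(1:ℝ)/2) * (P z) ^ (-(1:ℝ)/2 - 1))) z := by
      intro z hz
      rw [Set.uIcc_of_le hS.le] at hz
      have hz1 : (1:ℝ) ≤ z := hz.1
      have hzm : z ^ m ≠ 0 := by positivity
      have hP : HasDerivAt P (a * ((m:ℝ) * z ^ (m-1) / (z ^ m) ^ 2)) z := by
        have h1 : HasDerivAt (fun z : ℝ => (z ^ m)⁻¹) (-((m:ℝ) * z ^ (m-1)) / (z ^ m) ^ 2) z :=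
          (hasDerivAt_pow m z).inv hzm
        have h2 : HasDerivAt (fun z : ℝ => v ^ 2 + a * (1 - (z ^ m)⁻¹))
            (0 + a * (0 - (-((m:ℝ) * z ^ (m-1)) / (z ^ m) ^ 2))) z :=
          (hasDerivAt_const z (v^2)).add (((hasDerivAt_const z (1:ℝ)).sub h1).const_mul a)
        convert h2 using 1; ring
      have hPne : P z ≠ 0 := (hP_pos v z hv hz1).ne'
      have h3 : HasDerivAt (fun z => (P z) ^ (-(1:ℝ)/2))
          ((a * ((m:ℝ) * z ^ (m-1) / (z ^ m) ^ 2)) * (-(1:ℝ)/2) * (P z) ^ (-(1:ℝ)/2 - 1)) z :=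
        hP.rpow_const (Or.inl hPne)
      have h4 := (hasDerivAt_id z).mul h3
      convert h4 using 1 <;> first | rfl | simp
    -- the derivative integrand
    set f : ℝ → ℝ := fun z =>
      (P z) ^ (-(1:ℝ)/2) + z * ((a * ((m:ℝ) * z ^ (m-1) / (z ^ m) ^ 2)) * (-(1:ℝ)/2) * (P z) ^ (-(1:ℝ)/2 - 1)) with hfdef
    have hzne : ∀ z ∈ Set.uIcc (1:ℝ) S, z ^ m ≠ 0 := by
      intro z hz
      rw [Set.uIcc_of_le hS.le] at hz
      have : (0:ℝ) < z := lt_of_lt_of_le one_pos hz.1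
      positivity
    have hPcont : ContinuousOn P (Set.uIcc 1 S) := by
      exact continuousOn_const.add (continuousOn_const.mul (continuousOn_const.sub
        (((continuous_pow m).continuousOn).inv₀ hzne)))
    have hPhalf : ContinuousOn (fun z => (P z) ^ (-(1:ℝ)/2)) (Set.uIcc 1 S) :=
      hPcont.rpow_const (fun z hz => Or.inl (hPz z hz).ne')
    have hq : ContinuousOn (fun z : ℝ => a * ((m:ℝ) * z ^ (m-1) / (z ^ m) ^ 2)) (Set.uIcc 1 S) := by
      apply continuousOn_const.mul
      apply ContinuousOn.div
      · exact continuousOn_const.mul (continuous_pow (m-1)).continuousOn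
      · exact ((continuous_pow m).pow 2).continuousOn
      · exact fun z hz => pow_ne_zero 2 (hzne z hz)
    have hfcont : ContinuousOn f (Set.uIcc 1 S) := by
      apply hPhalf.add
      exact continuousOn_id.mul ((hq.mul continuousOn_const).mul
        (hPcont.rpow_const (fun z hz => Or.inl (hPz z hz).ne')))
    have hint_f : IntervalIntegrable f volume 1 S := hfcont.intervalIntegrable
    have hint_half : IntervalIntegrable (fun z => (P z) ^ (-(1:ℝ)/2)) volume 1 S :=
      hPhalf.intervalIntegrable
    have hFTC : (∫ z in (1:ℝ)..S, f z)
        = S * (P S) ^ (-(1:ℝ)/2) - 1 * (P 1) ^ (-(1:ℝ)/2) :=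
      intervalIntegral.integral_eq_sub_of_hasDerivAt hderiv hint_f
    -- pointwise identity
    have key : Set.EqOn (fun z => (z ^ m)⁻¹ / (P z) ^ ((3:ℝ)/2))
        (fun z => (2 / (a * (m:ℝ))) * ((P z) ^ (-(1:ℝ)/2) - f z)) (Set.uIcc 1 S) := by
      intro z hz
      have hz1 : (1:ℝ) ≤ z := by rw [Set.uIcc_of_le hS.le] at hz; exact hz.1
      have hzpos : (0:ℝ) < z := lt_of_lt_of_le one_pos hz1
      have hPpos : 0 < P z := hPz z hz
      have h32 : (P z) ^ (-(1:ℝ)/2 - 1) = ((P z) ^ ((3:ℝ)/2))⁻¹ := by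
        rw [← Real.rpow_neg hPpos.le]; norm_num
      have hzm : z ^ (m-1) * z = z ^ m := by
        rw [← pow_succ]; congr 1; omega
      have h1 : (P z) ^ (-(1:ℝ)/2) - f z
          = (a * (m:ℝ) / 2) * (z ^ m)⁻¹ * ((P z) ^ ((3:ℝ)/2))⁻¹ := by
        simp only [hfdef]
        rw [h32]
        have hzmne : (z:ℝ) ^ m ≠ 0 := by positivity
        field_simp
        ring_nf
        rw [show z * z ^ (m-1) = z ^ m by rw [mul_comm]; exact hzm]
      simp only
      rw [h1, div_eq_mul_inv]
      have hamne : a * (m:ℝ) ≠ 0 := by positivity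
      field_simp
    calc v * ∫ z in (1:ℝ)..S, (z ^ m)⁻¹ / (P z) ^ ((3:ℝ)/2)
        = v * ∫ z in (1:ℝ)..S, (2 / (a * (m:ℝ))) * ((P z) ^ (-(1:ℝ)/2) - f z) := by
          rw [intervalIntegral.integral_congr key]
      _ = v * ((2 / (a * (m:ℝ))) * ((∫ z in (1:ℝ)..S, (P z) ^ (-(1:ℝ)/2)) - ∫ z in (1:ℝ)..S, f z)) := by
          rw [intervalIntegral.integral_const_mul, intervalIntegral.integral_sub hint_half hint_f]
      _ = (2 / (a * (m:ℝ))) * g v := by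
          rw [hFTC]
          have hP1 : P 1 = v ^ 2 := by simp [hPdef]
          have hv2 : ((v ^ 2 : ℝ)) ^ (-(1:ℝ)/2) = v⁻¹ := by
            rw [← Real.rpow_natCast v 2, ← Real.rpow_mul hv.le]
            norm_num [Real.rpow_neg_one]
          rw [hP1, hv2]
          simp only [hgdef, hPdef]
          rw [intervalIntegral.integral_const_mul]
          have hvne : v ≠ 0 := hv.ne'
          field_simp
          ring
  -- Step 2: the limit of (2 / (a m)) * g
  have hc : 0 < a * (1 - (S ^ m)⁻¹) := by
    have hSm : (1:ℝ) < S ^ m := one_lt_pow₀ hS (by omega)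
    have : (S ^ m)⁻¹ < 1 := inv_lt_one_of_one_lt₀ hSm
    nlinarith
  have T1 : Filter.Tendsto (fun v : ℝ => ∫ z in (1:ℝ)..S, v * (v ^ 2 + a * (1 - (z ^ m)⁻¹)) ^ (-(1:ℝ)/2))
      (nhdsWithin 0 (Set.Ioi 0)) (nhds 0) := by
    have hT : Filter.Tendsto (fun v : ℝ => ∫ z in (1:ℝ)..S, v * (v ^ 2 + a * (1 - (z ^ m)⁻¹)) ^ (-(1:ℝ)/2))
        (nhdsWithin 0 (Set.Ioi 0)) (nhds (∫ z in (1:ℝ)..S, (0:ℝ))) := by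
      apply intervalIntegral.tendsto_integral_filter_of_dominated_convergence (fun _ => (1:ℝ))
      · filter_upwards [self_mem_nhdsWithin] with v hv
        have hv : (0:ℝ) < v := hv
        apply ContinuousOn.aestronglyMeasurable _ measurableSet_uIoc
        have hzne : ∀ z ∈ Set.uIoc (1:ℝ) S, z ^ m ≠ 0 := by
          intro z hz
          rw [Set.uIoc_of_le hS.le] at hz
          have : (0:ℝ) < z := lt_trans one_pos hz.1
          positivity
        apply ContinuousOn.mul continuousOn_const
        apply ContinuousOn.rpow_const
        · exact continuousOn_const.add (continuousOn_const.mul (continuousOn_const.sub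
            (((continuous_pow m).continuousOn).inv₀ hzne)))
        · intro z hz
          rw [Set.uIoc_of_le hS.le] at hz
          exact Or.inl (hP_pos v z hv hz.1.le).ne'
      · filter_upwards [self_mem_nhdsWithin] with v hv
        have hv : (0:ℝ) < v := hv
        filter_upwards with z hz
        rw [Set.uIoc_of_le hS.le] at hz
        have hz1 : (1:ℝ) ≤ z := hz.1.le
        have hX : v ^ 2 ≤ v ^ 2 + a * (1 - (z ^ m)⁻¹) := by
          have := hu_nonneg z hz1; nlinarith
        have hle : (v ^ 2 + a * (1 - (z ^ m)⁻¹)) ^ (-(1:ℝ)/2) ≤ (v ^ 2) ^ (-(1:ℝ)/2) :=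
          Real.rpow_le_rpow_of_nonpos (by positivity) hX (by norm_num)
        have hv2 : ((v ^ 2 : ℝ)) ^ (-(1:ℝ)/2) = v⁻¹ := by
          rw [← Real.rpow_natCast v 2, ← Real.rpow_mul hv.le]
          norm_num [Real.rpow_neg_one]
        have hpos : 0 ≤ v * (v ^ 2 + a * (1 - (z ^ m)⁻¹)) ^ (-(1:ℝ)/2) :=
          mul_nonneg hv.le (Real.rpow_nonneg (hP_pos v z hv hz1).le _)
        rw [Real.norm_eq_abs, abs_of_nonneg hpos]
        calc v * (v ^ 2 + a * (1 - (z ^ m)⁻¹)) ^ (-(1:ℝ)/2) ≤ v * v⁻¹ := by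
              rw [← hv2]; exact mul_le_mul_of_nonneg_left hle hv.le
          _ = 1 := mul_inv_cancel₀ hv.ne'
      · exact intervalIntegrable_const
      · filter_upwards with z hz
        rw [Set.uIoc_of_le hS.le] at hz
        have hzm : (1:ℝ) < z ^ m := one_lt_pow₀ hz.1 (by omega)
        have hu : 0 < a * (1 - (z ^ m)⁻¹) := by
          have : (z ^ m)⁻¹ < 1 := inv_lt_one_of_one_lt₀ hzm
          nlinarith
        have hcont : Filter.Tendsto (fun v : ℝ => v * (v ^ 2 + a * (1 - (z ^ m)⁻¹)) ^ (-(1:ℝ)/2))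
            (nhds 0) (nhds 0) := by
          have h1 : Filter.Tendsto (fun v : ℝ => v ^ 2 + a * (1 - (z ^ m)⁻¹)) (nhds 0)
              (nhds (a * (1 - (z ^ m)⁻¹))) := by
            have hc1 : Continuous fun v : ℝ => v ^ 2 + a * (1 - (z ^ m)⁻¹) := by fun_prop
            simpa using hc1.tendsto 0
          have h2 : Filter.Tendsto (fun v : ℝ => (v ^ 2 + a * (1 - (z ^ m)⁻¹)) ^ (-(1:ℝ)/2))
              (nhds 0) (nhds ((a * (1 - (z ^ m)⁻¹)) ^ (-(1:ℝ)/2))) :=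
            ((Real.continuousAt_rpow_const _ _ (Or.inl hu.ne')).tendsto).comp h1
          have h3 := (continuous_id.tendsto (0:ℝ)).mul h2
          simpa using h3
        exact hcont.mono_left nhdsWithin_le_nhds
    simpa using hT
  have T2 : Filter.Tendsto (fun v : ℝ => v * S * (v ^ 2 + a * (1 - (S ^ m)⁻¹)) ^ (-(1:ℝ)/2))
      (nhdsWithin 0 (Set.Ioi 0)) (nhds 0) := by
    have h1 : Filter.Tendsto (fun v : ℝ => v ^ 2 + a * (1 - (S ^ m)⁻¹)) (nhds 0)
        (nhds (a * (1 - (S ^ m)⁻¹))) := by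
      have hc1 : Continuous fun v : ℝ => v ^ 2 + a * (1 - (S ^ m)⁻¹) := by fun_prop
      simpa using hc1.tendsto 0
    have h2 : Filter.Tendsto (fun v : ℝ => (v ^ 2 + a * (1 - (S ^ m)⁻¹)) ^ (-(1:ℝ)/2))
        (nhds 0) (nhds ((a * (1 - (S ^ m)⁻¹)) ^ (-(1:ℝ)/2))) :=
      ((Real.continuousAt_rpow_const _ _ (Or.inl hc.ne')).tendsto).comp h1
    have h3 := ((continuous_id.tendsto (0:ℝ)).mul (tendsto_const_nhds : Filter.Tendsto (fun _ : ℝ => S) (nhds 0) (nhds S))).mul h2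
    have h4 := h3.mono_left (nhdsWithin_le_nhds (s := Set.Ioi (0:ℝ)))
    simpa using h4
  have Tg : Filter.Tendsto g (nhdsWithin 0 (Set.Ioi 0)) (nhds 1) := by
    have heq : (0:ℝ) - 0 + 1 = 1 := by norm_num
    have h4 := (T1.sub T2).add (tendsto_const_nhds : Filter.Tendsto (fun _ : ℝ => (1:ℝ)) (nhdsWithin 0 (Set.Ioi 0)) (nhds 1))
    rw [heq] at h4
    simpa [hgdef] using h4
  have Tfinal : Filter.Tendsto (fun v => (2 / (a * (m:ℝ))) * g v)
      (nhdsWithin 0 (Set.Ioi 0)) (nhds (2 / (a * (m:ℝ)))) := by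
    have h5 := Tg.const_mul (2 / (a * (m:ℝ)))
    rwa [mul_one] at h5
  rw [← hmcast]
  exact Tfinal.congr' (Filter.EventuallyEq.symm hev)
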